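/- Let A, B, C be positive integers with ABC < p for a prime p. Then the number of 6-tuples (a₁, a₂, b₁, b₂, c₁, c₂) with 1 ≤ aᵢ ≤ A, 1 ≤ bᵢ ≤ B, 1 ≤ cᵢ ≤ C and a₁b₁c₂ = a₂b₂c₁ is at most Σ_{1 ≤ m ≤ ABC} τ₃(m)², and hence is O(ABC · (log p)⁸). -/

import Mathlib

/-- `τ₃ m`: the triple divisor function. -/
noncomputable def tau3 (m : ℕ) : ℕ :=
  {k : Fin 3 → ℕ | ∏ i, k i = m}.ncard

open Finset

variable {ι κ : Type*} [Fintype ι] [DecidableEq ι] [Fintype κ] [DecidableEq κ]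

open scoped Classical in
/-- finset of factorizations of `m` indexed by `ι`. -/
noncomputable def tset (ι : Type*) [Fintype ι] [DecidableEq ι] (m : ℕ) : Finset (ι → ℕ) :=
  (Fintype.piFinset fun _ => Finset.Icc 1 m).filter fun f => ∏ i, f i = m

lemma mem_tset {m : ℕ} (hm : 1 ≤ m) {f : ι → ℕ} :
    f ∈ tset ι m ↔ ∏ i, f i = m := by
  classical
  simp only [tset, mem_filter, Fintype.mem_piFinset, Finset.mem_Icc, and_iff_right_iff_imp]
  intro hf i
  have hdvd : f i ∣ m := hf ▸ Finset.dvd_prod_of_mem f (mem_univ i)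
  constructor
  · rcases Nat.eq_zero_or_pos (f i) with h | h
    · exfalso; rw [← hf] at hm; rw [Finset.prod_eq_zero (mem_univ i) h] at hm; omega
    · exact h
  · exact Nat.le_of_dvd hm hdvd

lemma tau3_eq {m : ℕ} (hm : 1 ≤ m) : tau3 m = (tset (Fin 3) m).card := by
  rw [tau3, ← Set.ncard_coe_finset]
  congr 1
  ext f
  simp [mem_tset hm]

open scoped Classical in
/-- finset of tuples with product in `[1, N]`. -/
noncomputable def fbox (ι : Type*) [Fintype ι] [DecidableEq ι] (N : ℕ) : Finset (ι → ℕ) :=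
  (Fintype.piFinset fun _ => Finset.Icc 1 N).filter fun f => ∏ i, f i ∈ Finset.Icc 1 N

lemma mem_fbox {N : ℕ} {f : ι → ℕ} :
    f ∈ fbox ι N ↔ ∏ i, f i ∈ Finset.Icc 1 N := by
  classical
  simp only [fbox, mem_filter, Fintype.mem_piFinset, Finset.mem_Icc, and_iff_right_iff_imp]
  intro hf i
  have hdvd : f i ∣ ∏ i, f i := Finset.dvd_prod_of_mem f (mem_univ i)
  constructor
  · rcases Nat.eq_zero_or_pos (f i) with h | h
    · exfalso; rw [Finset.prod_eq_zero (mem_univ i) h] at hf; omega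
    · exact h
  · exact le_trans (Nat.le_of_dvd (by omega) hdvd) hf.2

lemma sum_tset_card (N : ℕ) :
    ∑ m ∈ Finset.Icc 1 N, (tset ι m).card = (fbox ι N).card := by
  classical
  rw [Finset.card_eq_sum_card_fiberwise (s := fbox ι N) (f := fun f => ∏ i, f i) (t := Finset.Icc 1 N)
    (fun g hg => by exact mem_fbox.mp hg)]
  refine Finset.sum_congr rfl fun m hm => ?_
  rw [Finset.mem_Icc] at hm
  congr 1
  ext f
  simp only [Finset.mem_filter, mem_fbox, mem_tset hm.1, Finset.mem_Icc]
  constructor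
  · intro h
    refine ⟨?_, h⟩
    rw [h]; exact ⟨hm.1, hm.2⟩
  · rintro ⟨-, h⟩; exact h


lemma prod_update_mul (f : ι → ℕ) (i : ι) (c : ℕ) :
    ∏ x, Function.update f i (c * f i) x = c * ∏ x, f x := by
  rw [Finset.prod_update_of_mem (mem_univ i), mul_assoc,
    ← Finset.prod_eq_mul_prod_sdiff_singleton_of_mem (mem_univ i)]

lemma exists_matrix : ∀ m : ℕ, 1 ≤ m → ∀ (k : ι → ℕ) (l : κ → ℕ),
    ∏ i, k i = m → ∏ j, l j = m →
    ∃ d : ι → κ → ℕ, (∀ i, ∏ j, d i j = k i) ∧ (∀ j, ∏ i, d i j = l j) := by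
  intro m
  induction m using Nat.strong_induction_on with
  | _ m IH =>
    intro hm k l hk hl
    rcases eq_or_lt_of_le hm with h1 | h1
    · -- m = 1
      refine ⟨fun _ _ => 1, fun i => ?_, fun j => ?_⟩
      · have : k i ∣ 1 := by rw [h1, ← hk]; exact Finset.dvd_prod_of_mem k (mem_univ i)
        simp [Nat.dvd_one.mp this]
      · have : l j ∣ 1 := by rw [h1, ← hl]; exact Finset.dvd_prod_of_mem l (mem_univ j)
        simp [Nat.dvd_one.mp this]
    · set q := m.minFac with hq
      have hqp : q.Prime := Nat.minFac_prime (by omega)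
      have hqm : q ∣ m := Nat.minFac_dvd m
      obtain ⟨i, -, hi⟩ := (Nat.Prime.prime hqp).exists_mem_finset_dvd (hk ▸ hqm)
      obtain ⟨j, -, hj⟩ := (Nat.Prime.prime hqp).exists_mem_finset_dvd (hl ▸ hqm)
      set k' := Function.update k i (k i / q) with hk'
      set l' := Function.update l j (l j / q) with hl'
      have hki : q * (k i / q) = k i := Nat.mul_div_cancel' hi
      have hlj : q * (l j / q) = l j := Nat.mul_div_cancel' hj
      have hupk : Function.update k' i (q * k' i) = k := by
        rw [hk', Function.update_idem, Function.update_self, hki, Function.update_eq_self]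
      have hupl : Function.update l' j (q * l' j) = l := by
        rw [hl', Function.update_idem, Function.update_self, hlj, Function.update_eq_self]
      have hkprod : q * ∏ x, k' x = m := by
        rw [← prod_update_mul k' i q, hupk, hk]
      have hlprod : q * ∏ x, l' x = m := by
        rw [← prod_update_mul l' j q, hupl, hl]
      have hq2 : 2 ≤ q := hqp.two_le
      have hmq : m / q < m := Nat.div_lt_self (by omega) (by omega)
      have hmq1 : 1 ≤ m / q := Nat.one_le_div_iff (by omega) |>.mpr (Nat.le_of_dvd (by omega) hqm)
      have hk'' : ∏ x, k' x = m / q := by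
        rw [← hkprod, Nat.mul_div_cancel_left _ (by omega : 0 < q)]
      have hl'' : ∏ x, l' x = m / q := by
        rw [← hlprod, Nat.mul_div_cancel_left _ (by omega : 0 < q)]
      obtain ⟨d', hrow, hcol⟩ := IH (m / q) hmq hmq1 k' l' hk'' hl''
      refine ⟨Function.update d' i (Function.update (d' i) j (q * d' i j)), ?_, ?_⟩
      · intro i'
        rcases eq_or_ne i' i with rfl | hne
        · rw [Function.update_self, prod_update_mul (d' i') j q, hrow i', hk',
            Function.update_self, hki]
        · rw [Function.update_of_ne hne, hrow i', hk', Function.update_of_ne hne]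
      · intro j'
        rcases eq_or_ne j' j with rfl | hne
        · have hcongr : ∀ i', Function.update d' i (Function.update (d' i) j' (q * d' i j')) i' j'
              = Function.update (fun i'' => d' i'' j') i (q * d' i j') i' := by
            intro i'
            rcases eq_or_ne i' i with rfl | hne
            · rw [Function.update_self, Function.update_self, Function.update_self]
            · rw [Function.update_of_ne hne, Function.update_of_ne hne]
          rw [Finset.prod_congr rfl fun i' _ => hcongr i',
            prod_update_mul (fun i'' => d' i'' j') i q, hcol j', hl',
            Function.update_self, hlj]
        · have hcongr : ∀ i', Function.update d' i (Function.update (d' i) j (q * d' i j)) i' j'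
              = d' i' j' := by
            intro i'
            rcases eq_or_ne i' i with rfl | hne'
            · rw [Function.update_self, Function.update_of_ne hne]
            · rw [Function.update_of_ne hne']
          rw [Finset.prod_congr rfl fun i' _ => hcongr i', hcol j', hl',
            Function.update_of_ne hne]

lemma tset_sq_le {m : ℕ} (hm : 1 ≤ m) :
    (tset ι m).card * (tset κ m).card ≤ (tset (ι × κ) m).card := by
  classical
  rw [← Finset.card_product]
  apply Finset.card_le_card_of_surjOn
    (fun g => (fun i => ∏ j, g (i, j), fun j => ∏ i, g (i, j)))
  rintro ⟨u, v⟩ huv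
  rw [Set.mem_image]
  simp only [Finset.coe_product, Set.mem_prod, Finset.mem_coe, mem_tset hm] at huv
  obtain ⟨d, hrow, hcol⟩ := exists_matrix m hm u v huv.1 huv.2
  refine ⟨fun p => d p.1 p.2, ?_, ?_⟩
  · rw [Finset.mem_coe, mem_tset hm, Fintype.prod_prod_type]
    simp only [hrow]
    exact huv.1
  · simp only [Prod.mk.injEq]
    constructor
    · funext i; exact hrow i
    · funext j
      rw [← hcol j]

lemma harmonic_le (N : ℕ) (hN : 1 ≤ N) :
    ∑ d ∈ Finset.Icc 1 N, ((d : ℝ))⁻¹ ≤ 1 + Real.log N := by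
  induction N, hN using Nat.le_induction with
  | base => norm_num
  | succ N hN ih =>
    rw [Finset.sum_Icc_succ_top (by omega)]
    have hN0 : (0:ℝ) < N := by exact_mod_cast hN
    have h1 : Real.log ((N:ℝ) / ((N:ℝ)+1)) ≤ (N:ℝ)/((N:ℝ)+1) - 1 :=
      Real.log_le_sub_one_of_pos (by positivity)
    rw [Real.log_div (by positivity) (by positivity)] at h1
    have h2 : (N:ℝ)/((N:ℝ)+1) - 1 = -(((N:ℝ)+1)⁻¹) := by field_simp; ring
    have h3 : ((N:ℝ)+1)⁻¹ + Real.log N ≤ Real.log ((N:ℝ)+1) := by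
      rw [h2] at h1; linarith
    have hcast : ((N+1 : ℕ):ℝ) = (N:ℝ)+1 := by push_cast; ring
    rw [hcast]
    linarith

lemma fbox_entry {N : ℕ} {f : ι → ℕ} (hf : f ∈ fbox ι N) (i : ι) : f i ∈ Finset.Icc 1 N := by
  classical
  have := mem_fbox.mp hf
  rw [Finset.mem_Icc] at *
  have hdvd : f i ∣ ∏ x, f x := Finset.dvd_prod_of_mem f (mem_univ i)
  constructor
  · rcases Nat.eq_zero_or_pos (f i) with h | h
    · exfalso; rw [Finset.prod_eq_zero (mem_univ i) h] at this; omega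
    · exact h
  · exact le_trans (Nat.le_of_dvd (by omega) hdvd) this.2

lemma fbox_succ_card (k N : ℕ) :
    (fbox (Fin (k + 1)) N).card = ∑ d ∈ Finset.Icc 1 N, (fbox (Fin k) (N / d)).card := by
  classical
  rw [Finset.card_eq_sum_card_fiberwise (s := fbox (Fin (k+1)) N) (f := fun f => f 0)
    (t := Finset.Icc 1 N) (fun g hg => fbox_entry hg 0)]
  refine Finset.sum_congr rfl fun d hd => ?_
  rw [Finset.mem_Icc] at hd
  have hd1 : 1 ≤ d := hd.1
  refine Finset.card_bij' (fun f _ => Fin.tail f) (fun g _ => Fin.cons d g) ?_ ?_ ?_ ?_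
  · intro f hf
    rw [Finset.mem_filter] at hf
    obtain ⟨hf1, hf2⟩ := hf
    have hprod := mem_fbox.mp hf1
    rw [Finset.mem_Icc, Fin.prod_univ_succ, hf2] at hprod
    rw [mem_fbox, Finset.mem_Icc]
    dsimp only [Fin.tail]
    constructor
    · by_contra h
      have h0 : ∏ i : Fin k, f i.succ = 0 := by omega
      rw [h0, mul_zero] at hprod; omega
    · rw [Nat.le_div_iff_mul_le (by omega), mul_comm]
      exact hprod.2
  · intro g hg
    have hprod := mem_fbox.mp hg
    rw [Finset.mem_Icc] at hprod
    rw [Finset.mem_filter]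
    refine ⟨?_, by simp⟩
    rw [mem_fbox, Finset.mem_Icc, Fin.prod_univ_succ]
    simp only [Fin.cons_zero, Fin.cons_succ]
    constructor
    · have : 1 ≤ ∏ i : Fin k, g i := hprod.1
      exact Nat.one_le_iff_ne_zero.mpr (by positivity)
    · calc d * ∏ x : Fin k, g x ≤ d * (N / d) :=
            Nat.mul_le_mul_left d hprod.2
        _ ≤ N := Nat.mul_div_le N d
  · intro f hf
    rw [Finset.mem_filter] at hf
    funext x
    induction x using Fin.cases with
    | zero => simp [hf.2]
    | succ i => simp [Fin.tail]
  · intro g hg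
    funext x
    simp [Fin.tail]

lemma fbox_card_le : ∀ (k N : ℕ), 1 ≤ N →
    ((fbox (Fin (k + 1)) N).card : ℝ) ≤ N * (1 + Real.log N) ^ k := by
  intro k
  induction k with
  | zero =>
    intro N hN
    have h1 : (fbox (Fin 1) N).card ≤ N := by
      unfold fbox
      refine le_trans (Finset.card_filter_le _ _) ?_
      rw [Fintype.card_piFinset]
      simp
    simpa using (Nat.cast_le.mpr h1 : ((fbox (Fin 1) N).card : ℝ) ≤ N)
  | succ k ih =>
    intro N hN
    rw [fbox_succ_card, Nat.cast_sum]
    have hlogN : 0 ≤ Real.log N := Real.log_natCast_nonneg N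
    have step : ∀ d ∈ Finset.Icc 1 N,
        ((fbox (Fin (k + 1)) (N / d)).card : ℝ) ≤ ((d : ℝ))⁻¹ * (N * (1 + Real.log N) ^ k) := by
      intro d hd
      rw [Finset.mem_Icc] at hd
      have hnd1 : 1 ≤ N / d := (Nat.one_le_div_iff (by omega)).mpr hd.2
      have h1 := ih (N / d) hnd1
      have h2 : ((N / d : ℕ) : ℝ) ≤ (N : ℝ) / d := Nat.cast_div_le
      have h3 : (1 + Real.log (N / d : ℕ)) ^ k ≤ (1 + Real.log N) ^ k := by
        apply pow_le_pow_left₀ (by positivity)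
        have : ((N / d : ℕ) : ℝ) ≤ (N : ℝ) := Nat.cast_le.mpr (Nat.div_le_self N d)
        have hpos : (0:ℝ) < ((N / d : ℕ) : ℝ) := by exact_mod_cast hnd1
        linarith [Real.log_le_log hpos this]
      calc ((fbox (Fin (k + 1)) (N / d)).card : ℝ)
          ≤ ((N / d : ℕ) : ℝ) * (1 + Real.log (N / d : ℕ)) ^ k := h1
        _ ≤ ((N : ℝ) / d) * (1 + Real.log N) ^ k := by
            apply mul_le_mul h2 h3 (by positivity) (by positivity)
        _ = ((d : ℝ))⁻¹ * (N * (1 + Real.log N) ^ k) := by ring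
    calc (∑ d ∈ Finset.Icc 1 N, ((fbox (Fin (k + 1)) (N / d)).card : ℝ))
        ≤ ∑ d ∈ Finset.Icc 1 N, ((d : ℝ))⁻¹ * (N * (1 + Real.log N) ^ k) :=
          Finset.sum_le_sum step
      _ = (∑ d ∈ Finset.Icc 1 N, ((d : ℝ))⁻¹) * (N * (1 + Real.log N) ^ k) := by
          rw [Finset.sum_mul]
      _ ≤ (1 + Real.log N) * (N * (1 + Real.log N) ^ k) := by
          apply mul_le_mul_of_nonneg_right (harmonic_le N hN) (by positivity)
      _ = N * (1 + Real.log N) ^ (k + 1) := by ring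

lemma fbox_card_congr (e : ι ≃ κ) (N : ℕ) : (fbox ι N).card = (fbox κ N).card := by
  classical
  refine Finset.card_bij' (fun f _ => f ∘ e.symm) (fun g _ => g ∘ e) ?_ ?_ ?_ ?_
  · intro f hf
    rw [mem_fbox] at hf ⊢
    show ∏ i, f (e.symm i) ∈ Finset.Icc 1 N
    rwa [Equiv.prod_comp e.symm f]
  · intro g hg
    rw [mem_fbox] at hg ⊢
    show ∏ i, g (e i) ∈ Finset.Icc 1 N
    rwa [Equiv.prod_comp e g]
  · intro f _; funext x; simp
  · intro g _; funext x; simp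

lemma sum_tau3_sq_le (N : ℕ) (hN : 1 ≤ N) :
    ((∑ m ∈ Finset.Icc 1 N, (tau3 m) ^ 2 : ℕ) : ℝ) ≤ N * (1 + Real.log N) ^ 8 := by
  have h1 : ∑ m ∈ Finset.Icc 1 N, (tau3 m) ^ 2 ≤ (fbox (Fin 9) N).card := by
    calc ∑ m ∈ Finset.Icc 1 N, (tau3 m) ^ 2
        = ∑ m ∈ Finset.Icc 1 N, (tset (Fin 3) m).card ^ 2 := by
          refine Finset.sum_congr rfl fun m hm => ?_
          rw [Finset.mem_Icc] at hm
          rw [tau3_eq hm.1]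
      _ ≤ ∑ m ∈ Finset.Icc 1 N, (tset (Fin 3 × Fin 3) m).card := by
          refine Finset.sum_le_sum fun m hm => ?_
          rw [Finset.mem_Icc] at hm
          rw [sq]
          exact tset_sq_le hm.1
      _ = (fbox (Fin 3 × Fin 3) N).card := sum_tset_card N
      _ = (fbox (Fin 9) N).card := fbox_card_congr finProdFinEquiv N
  calc ((∑ m ∈ Finset.Icc 1 N, (tau3 m) ^ 2 : ℕ) : ℝ)
      ≤ ((fbox (Fin 9) N).card : ℝ) := Nat.cast_le.mpr h1
    _ ≤ N * (1 + Real.log N) ^ 8 := fbox_card_le 8 N hN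

open scoped Classical in
noncomputable def tbox (A B C m : ℕ) : Finset (ℕ × ℕ × ℕ) :=
  (Finset.Icc 1 A ×ˢ Finset.Icc 1 B ×ˢ Finset.Icc 1 C).filter fun x => x.1 * x.2.1 * x.2.2 = m

lemma tbox_card_le (A B C m : ℕ) (hm : 1 ≤ m) : (tbox A B C m).card ≤ tau3 m := by
  classical
  rw [tau3_eq hm]
  apply Finset.card_le_card_of_injOn (fun x => ![x.1, x.2.1, x.2.2])
  · intro x hx
    simp only [tbox, Finset.mem_coe, Finset.mem_filter] at hx
    rw [Finset.mem_coe, mem_tset hm, Fin.prod_univ_three]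
    simpa using hx.2
  · intro x _ y _ h
    have h0 := congr_fun h 0
    have h1 := congr_fun h 1
    have h2 := congr_fun h 2
    simp only [Matrix.cons_val_zero, Matrix.cons_val_one, Matrix.head_cons] at h0 h1 h2
    have : y.2.2 = x.2.2 := by simpa using h2.symm
    exact Prod.ext h0 (Prod.ext h1 this.symm)

open scoped Classical in
noncomputable def sset (A B C : ℕ) : Finset (ℕ × ℕ × ℕ × ℕ × ℕ × ℕ) :=
  (Finset.Icc 1 A ×ˢ Finset.Icc 1 A ×ˢ Finset.Icc 1 B ×ˢ Finset.Icc 1 B ×ˢ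
      Finset.Icc 1 C ×ˢ Finset.Icc 1 C).filter
    fun t => t.1 * t.2.2.1 * t.2.2.2.2.2 = t.2.1 * t.2.2.2.1 * t.2.2.2.2.1

lemma sset_coe (A B C : ℕ) :
    {t : ℕ × ℕ × ℕ × ℕ × ℕ × ℕ |
        t.1 ∈ Finset.Icc 1 A ∧ t.2.1 ∈ Finset.Icc 1 A ∧
        t.2.2.1 ∈ Finset.Icc 1 B ∧ t.2.2.2.1 ∈ Finset.Icc 1 B ∧
        t.2.2.2.2.1 ∈ Finset.Icc 1 C ∧ t.2.2.2.2.2 ∈ Finset.Icc 1 C ∧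
        t.1 * t.2.2.1 * t.2.2.2.2.2 = t.2.1 * t.2.2.2.1 * t.2.2.2.2.1}
      = ↑(sset A B C) := by
  ext t
  simp only [Set.mem_setOf_eq, sset, Finset.coe_filter, Finset.mem_product]
  tauto

lemma sset_card_le (A B C : ℕ) :
    (sset A B C).card ≤ ∑ m ∈ Finset.Icc 1 (A * B * C), (tau3 m) ^ 2 := by
  classical
  rw [Finset.card_eq_sum_card_fiberwise (s := sset A B C)
    (f := fun t => t.1 * t.2.2.1 * t.2.2.2.2.2) (t := Finset.Icc 1 (A * B * C)) ?_]
  · refine Finset.sum_le_sum fun m hm => ?_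
    rw [Finset.mem_Icc] at hm
    have hfib : ((sset A B C).filter fun t => t.1 * t.2.2.1 * t.2.2.2.2.2 = m).card
        ≤ ((tbox A B C m) ×ˢ (tbox A B C m)).card := by
      apply Finset.card_le_card_of_injOn
        (fun t => ((t.1, t.2.2.1, t.2.2.2.2.2), (t.2.1, t.2.2.2.1, t.2.2.2.2.1)))
      · intro t ht
        simp only [Finset.mem_coe, Finset.mem_filter, sset, Finset.mem_product] at ht
        obtain ⟨⟨hbox, heq⟩, hprod⟩ := ht
        simp only [Finset.mem_coe, Finset.mem_product, tbox, Finset.mem_filter]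
        refine ⟨⟨⟨hbox.1, hbox.2.2.1, hbox.2.2.2.2.2⟩, hprod⟩,
          ⟨⟨hbox.2.1, hbox.2.2.2.1, hbox.2.2.2.2.1⟩, ?_⟩⟩
        rw [← heq]; exact hprod
      · intro x _ y _ h
        simp only [Prod.mk.injEq] at h
        obtain ⟨⟨h1, h3, h6⟩, h2, h4, h5⟩ := h
        exact Prod.ext h1 (Prod.ext h2 (Prod.ext h3 (Prod.ext h4 (Prod.ext h5 h6))))
    calc ((sset A B C).filter fun t => t.1 * t.2.2.1 * t.2.2.2.2.2 = m).card
        ≤ ((tbox A B C m) ×ˢ (tbox A B C m)).card := hfib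
      _ = (tbox A B C m).card * (tbox A B C m).card := Finset.card_product _ _
      _ ≤ tau3 m * tau3 m :=
          Nat.mul_le_mul (tbox_card_le A B C m hm.1) (tbox_card_le A B C m hm.1)
      _ = (tau3 m) ^ 2 := (sq (tau3 m)).symm
  · intro t ht
    simp only [Finset.mem_coe, sset, Finset.mem_filter, Finset.mem_product, Finset.mem_Icc] at ht
    obtain ⟨⟨ha1, ha2, hb1, hb2, hc1, hc2⟩, -⟩ := ht
    rw [Finset.mem_coe, Finset.mem_Icc]
    constructor
    · simpa using Nat.mul_le_mul (Nat.mul_le_mul ha1.1 hb1.1) hc2.1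
    · exact Nat.mul_le_mul (Nat.mul_le_mul ha1.2 hb1.2) hc2.2

theorem stmt_12 :
    ∃ C0 : ℝ, ∀ (p A B C : ℕ), p.Prime → 0 < A → 0 < B → 0 < C → A * B * C < p →
      ({t : ℕ × ℕ × ℕ × ℕ × ℕ × ℕ |
          t.1 ∈ Finset.Icc 1 A ∧ t.2.1 ∈ Finset.Icc 1 A ∧
          t.2.2.1 ∈ Finset.Icc 1 B ∧ t.2.2.2.1 ∈ Finset.Icc 1 B ∧
          t.2.2.2.2.1 ∈ Finset.Icc 1 C ∧ t.2.2.2.2.2 ∈ Finset.Icc 1 C ∧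
          t.1 * t.2.2.1 * t.2.2.2.2.2 = t.2.1 * t.2.2.2.1 * t.2.2.2.2.1}.ncard
        ≤ ∑ m ∈ Finset.Icc 1 (A * B * C), (tau3 m) ^ 2) ∧
      (({t : ℕ × ℕ × ℕ × ℕ × ℕ × ℕ |
          t.1 ∈ Finset.Icc 1 A ∧ t.2.1 ∈ Finset.Icc 1 A ∧
          t.2.2.1 ∈ Finset.Icc 1 B ∧ t.2.2.2.1 ∈ Finset.Icc 1 B ∧
          t.2.2.2.2.1 ∈ Finset.Icc 1 C ∧ t.2.2.2.2.2 ∈ Finset.Icc 1 C ∧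
          t.1 * t.2.2.1 * t.2.2.2.2.2 = t.2.1 * t.2.2.2.1 * t.2.2.2.2.1}.ncard : ℝ)
        ≤ C0 * (A * B * C : ℝ) * Real.log p ^ 8) := by
  refine ⟨(1 + (Real.log 2)⁻¹) ^ 8, fun p A B C hp hA hB hC hlt => ?_⟩
  have hncard : ({t : ℕ × ℕ × ℕ × ℕ × ℕ × ℕ |
      t.1 ∈ Finset.Icc 1 A ∧ t.2.1 ∈ Finset.Icc 1 A ∧
      t.2.2.1 ∈ Finset.Icc 1 B ∧ t.2.2.2.1 ∈ Finset.Icc 1 B ∧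
      t.2.2.2.2.1 ∈ Finset.Icc 1 C ∧ t.2.2.2.2.2 ∈ Finset.Icc 1 C ∧
      t.1 * t.2.2.1 * t.2.2.2.2.2 = t.2.1 * t.2.2.2.1 * t.2.2.2.2.1}).ncard
      = (sset A B C).card := by
    rw [sset_coe A B C, Set.ncard_coe_finset]
  refine ⟨by rw [hncard]; exact sset_card_le A B C, ?_⟩
  rw [hncard]
  have hN : 1 ≤ A * B * C := Nat.one_le_iff_ne_zero.mpr (by positivity)
  have hN' : (1 : ℝ) ≤ ((A * B * C : ℕ) : ℝ) := by exact_mod_cast hN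
  have h1 : ((sset A B C).card : ℝ)
      ≤ ((A * B * C : ℕ) : ℝ) * (1 + Real.log ((A * B * C : ℕ) : ℝ)) ^ 8 :=
    le_trans (Nat.cast_le.mpr (sset_card_le A B C)) (sum_tau3_sq_le _ hN)
  have hlog2 : 0 < Real.log 2 := Real.log_pos one_lt_two
  have hp2 : (2 : ℝ) ≤ (p : ℝ) := by exact_mod_cast hp.two_le
  have hLp : Real.log 2 ≤ Real.log p := Real.log_le_log (by norm_num) hp2
  have hNp : ((A * B * C : ℕ) : ℝ) ≤ (p : ℝ) := by exact_mod_cast hlt.le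
  have hlogNp : Real.log ((A * B * C : ℕ) : ℝ) ≤ Real.log p :=
    Real.log_le_log (by linarith) hNp
  have hone : (1 : ℝ) ≤ (Real.log 2)⁻¹ * Real.log p := by
    rw [← inv_mul_cancel₀ (ne_of_gt hlog2)]
    exact mul_le_mul_of_nonneg_left hLp (by positivity)
  have hlogN0 : 0 ≤ Real.log ((A * B * C : ℕ) : ℝ) := Real.log_natCast_nonneg _
  have hkey : (1 + Real.log ((A * B * C : ℕ) : ℝ)) ^ 8
      ≤ ((1 + (Real.log 2)⁻¹) * Real.log p) ^ 8 := by
    apply pow_le_pow_left₀ (by positivity)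
    have : (1 + (Real.log 2)⁻¹) * Real.log p
        = Real.log p + (Real.log 2)⁻¹ * Real.log p := by ring
    rw [this]
    linarith
  calc ((sset A B C).card : ℝ)
      ≤ ((A * B * C : ℕ) : ℝ) * (1 + Real.log ((A * B * C : ℕ) : ℝ)) ^ 8 := h1
    _ ≤ ((A * B * C : ℕ) : ℝ) * (((1 + (Real.log 2)⁻¹) * Real.log p) ^ 8) :=
        mul_le_mul_of_nonneg_left hkey (by positivity)
    _ = (1 + (Real.log 2)⁻¹) ^ 8 * ((A : ℝ) * B * C) * Real.log p ^ 8 := by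
        push_cast; ring
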